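/- Let f = ∑_{k=1}^p X_{G_k}'β_k with V := ∑_{k=1}^p |β_k|₂ < ∞, and suppose the group OGA (with each group's design matrix satisfying X_{G_j}'X_{G_j}/N = I) is run for m ≥ 1 steps on data (Y, X) where Y = f(X) + U pointwise over the sample. Then the residual r_m after m steps satisfies ‖r_m‖_N² ≤ ‖Y − f‖_N² + 4V²/m, where ‖v‖_N² = (1/N)∑_{i=1}^N v_i². -/

import Mathlib

open Finset

lemma oga_cs {ι : Type*} (s : Finset ι) (f g : ι → ℝ) :
    ∑ i ∈ s, f i * g i ≤ Real.sqrt (∑ i ∈ s, f i ^ 2) * Real.sqrt (∑ i ∈ s, g i ^ 2) := by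
  have h := Finset.sum_mul_sq_le_sq_mul_sq s f g
  calc ∑ i ∈ s, f i * g i ≤ |∑ i ∈ s, f i * g i| := le_abs_self _
    _ = Real.sqrt ((∑ i ∈ s, f i * g i) ^ 2) := (Real.sqrt_sq_eq_abs _).symm
    _ ≤ Real.sqrt ((∑ i ∈ s, f i ^ 2) * ∑ i ∈ s, g i ^ 2) := Real.sqrt_le_sqrt h
    _ = _ := Real.sqrt_mul (Finset.sum_nonneg fun i _ => sq_nonneg _) _

lemma oga_recursion (C : ℝ) (hC : 0 < C) (b : ℕ → ℝ)
    (hmono : ∀ k, b (k + 1) ≤ b k)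
    (hstep : ∀ k, 0 ≤ b k → b (k + 1) ≤ b k - b k ^ 2 / C)
    (m : ℕ) (hm : 1 ≤ m) : b m ≤ C / m := by
  have hmR : (0 : ℝ) < m := by exact_mod_cast hm
  by_cases hbm : b m ≤ 0
  · exact hbm.trans (le_of_lt (div_pos hC hmR))
  push_neg at hbm
  have hanti : Antitone b := antitone_nat_of_succ_le hmono
  have hbk : ∀ k, k ≤ m → 0 < b k := fun k hk => lt_of_lt_of_le hbm (hanti hk)
  have key : ∀ k, k ≤ m → (k : ℝ) / C ≤ 1 / b k := by
    intro k hk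
    induction k with
    | zero =>
      simp only [Nat.cast_zero, zero_div]
      exact one_div_nonneg.mpr (hbk 0 (Nat.zero_le m)).le
    | succ n ih =>
      have hn : n ≤ m := Nat.le_of_succ_le hk
      have ihn := ih hn
      have hbn : 0 < b n := hbk n hn
      have hbn1 : 0 < b (n + 1) := hbk _ hk
      have hs := hstep n hbn.le
      have h1 : 1 / b n + 1 / C ≤ 1 / b (n + 1) := by
        rw [div_add_div _ _ (ne_of_gt hbn) (ne_of_gt hC), div_le_div_iff₀ (by positivity) hbn1]
        have hCs : C * b (n + 1) ≤ C * b n - b n ^ 2 := by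
          have := mul_le_mul_of_nonneg_left hs hC.le
          rw [mul_sub, mul_div_cancel₀ _ (ne_of_gt hC)] at this
          linarith
        nlinarith [hmono n]
      calc ((n + 1 : ℕ) : ℝ) / C = (n : ℝ) / C + 1 / C := by push_cast; ring
        _ ≤ 1 / b n + 1 / C := by linarith
        _ ≤ 1 / b (n + 1) := h1
  have hfin := key m le_rfl
  rw [div_le_div_iff₀ hC hbm] at hfin
  rw [le_div_iff₀ hmR]
  nlinarith

set_option maxHeartbeats 1000000 in
/-- O(1/m) empirical-risk bound for the group orthogonal greedy algorithm:
with groups of regressors `u j` that are empirically orthonormalized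
(`⟪u j a, u j b⟫ = N·δ_{ab}`), `f = ∑_j ∑_a β_{j,a} u_{j,a}`,
`V = ∑_j |β_j|₂`, residuals `r k = Y − proj_{K k} Y` where `K k` is the span of
all groups selected in the first `k` greedy steps, and greedy selection of the
group maximizing `|X_{G_j}' r|₂` among unselected groups, the residual after
`m ≥ 1` steps satisfies `‖r_m‖_N² ≤ ‖Y − f‖_N² + 4V²/m`. -/
theorem group_oga_risk_bound
    (N p : ℕ) (hN : 0 < N) (hp : 0 < p)
    (d : Fin p → ℕ) (u : ∀ j, Fin (d j) → EuclideanSpace ℝ (Fin N))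
    (hortho : ∀ j a b,
      (inner ℝ (u j a) (u j b) : ℝ) = if a = b then (N : ℝ) else 0)
    (β : ∀ j, Fin (d j) → ℝ)
    (f Y : EuclideanSpace ℝ (Fin N))
    (hf : f = ∑ j, ∑ a, β j a • u j a)
    (V : ℝ) (hV : V = ∑ j, Real.sqrt (∑ a, (β j a) ^ 2))
    (jhat : ℕ → Fin p)
    (K : ℕ → Submodule ℝ (EuclideanSpace ℝ (Fin N)))
    (hK : ∀ k, K k = Submodule.span ℝ
      (⋃ j ∈ (Finset.range k).image jhat, Set.range (u j)))
    (r : ℕ → EuclideanSpace ℝ (Fin N))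
    (hr : ∀ k, r k = Y - (Submodule.orthogonalProjection (K k) Y : EuclideanSpace ℝ (Fin N)))
    (hgreedy : ∀ k, ∀ j, j ∉ (Finset.range k).image jhat →
      ∑ a, (inner ℝ (u j a) (r k) : ℝ) ^ 2
        ≤ ∑ a, (inner ℝ (u (jhat k) a) (r k) : ℝ) ^ 2)
    (m : ℕ) (hm : 1 ≤ m) :
    ‖r m‖ ^ 2 / N ≤ ‖Y - f‖ ^ 2 / N + 4 * V ^ 2 / m := by
  have hN' : (0 : ℝ) < N := by exact_mod_cast hN
  have hm' : (0 : ℝ) < m := by exact_mod_cast hm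
  have hdivle : ∀ x y : ℝ, x ≤ y → x / (N : ℝ) ≤ y / (N : ℝ) := by
    intro x y h
    gcongr
  -- notation
  set S : ℕ → ℝ := fun k => ∑ a, (inner ℝ (u (jhat k) a) (r k) : ℝ) ^ 2 with hSdef
  have hSnn : ∀ k, 0 ≤ S k := fun k => Finset.sum_nonneg fun a _ => sq_nonneg _
  -- membership of group regressors in K k
  have hmem : ∀ k j, j ∈ (Finset.range k).image jhat → ∀ a, u j a ∈ K k := by
    intro k j hj a
    rw [hK]
    exact Submodule.subset_span (Set.mem_iUnion₂.mpr ⟨j, hj, ⟨a, rfl⟩⟩)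
  -- orthogonality of residuals
  have horth : ∀ k, ∀ w ∈ K k, (inner ℝ (r k) w : ℝ) = 0 := by
    intro k w hw
    rw [hr]
    exact (K k).starProjection_inner_eq_zero Y w hw
  -- monotonicity of K
  have hKmono : ∀ k, K k ≤ K (k + 1) := by
    intro k
    rw [hK, hK]
    apply Submodule.span_mono
    intro x hx
    simp only [Set.mem_iUnion] at hx ⊢
    obtain ⟨j, hj, hx⟩ := hx
    rcases Finset.mem_image.mp hj with ⟨i, hi, rfl⟩
    exact ⟨jhat i, Finset.mem_image.mpr ⟨i, Finset.mem_range.mpr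
      (Nat.lt_succ_of_lt (Finset.mem_range.mp hi)), rfl⟩, hx⟩
  -- minimality of residual
  have hmin : ∀ k, ∀ w ∈ K k, ‖r k‖ ^ 2 ≤ ‖Y - w‖ ^ 2 := by
    intro k w hw
    have hz : (inner ℝ (r k) ((Submodule.orthogonalProjection (K k) Y : EuclideanSpace ℝ (Fin N)) - w) : ℝ) = 0 :=
      horth k _ (Submodule.sub_mem _ (Submodule.coe_mem _) hw)
    have hsplit : Y - w = r k + ((Submodule.orthogonalProjection (K k) Y : EuclideanSpace ℝ (Fin N)) - w) := by
      rw [hr k]; abel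
    rw [hsplit, norm_add_sq_real, hz]
    nlinarith [sq_nonneg ‖(Submodule.orthogonalProjection (K k) Y : EuclideanSpace ℝ (Fin N)) - w‖]
  -- one-step improvement
  have H1 : ∀ k, ‖r (k + 1)‖ ^ 2 ≤ ‖r k‖ ^ 2 - S k / N := by
    intro k
    set c : Fin (d (jhat k)) → ℝ := fun a => (inner ℝ (u (jhat k) a) (r k) : ℝ) / N with hc
    set g : EuclideanSpace ℝ (Fin N) := ∑ a, c a • u (jhat k) a with hg
    have hjk : jhat k ∈ (Finset.range (k + 1)).image jhat :=
      Finset.mem_image.mpr ⟨k, Finset.mem_range.mpr (Nat.lt_succ_self k), rfl⟩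
    have hgmem : g ∈ K (k + 1) :=
      Submodule.sum_mem _ fun a _ => Submodule.smul_mem _ _ (hmem (k + 1) (jhat k) hjk a)
    have hwmem : (Submodule.orthogonalProjection (K k) Y : EuclideanSpace ℝ (Fin N)) + g ∈ K (k + 1) :=
      Submodule.add_mem _ (hKmono k (Submodule.coe_mem _)) hgmem
    have hYw : Y - ((Submodule.orthogonalProjection (K k) Y : EuclideanSpace ℝ (Fin N)) + g) = r k - g := by
      rw [hr k]; abel
    have hrg : (inner ℝ (r k) g : ℝ) = S k / N := by
      rw [hg, inner_sum]
      rw [hSdef]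
      simp only [real_inner_smul_right]
      rw [Finset.sum_div]
      refine Finset.sum_congr rfl fun a _ => ?_
      simp only [hc, real_inner_comm (u (jhat k) a) (r k)]
      ring
    have hgg : ‖g‖ ^ 2 = S k / N := by
      rw [← real_inner_self_eq_norm_sq, hg, sum_inner]
      simp only [real_inner_smul_left, inner_sum, real_inner_smul_right, hortho]
      simp only [mul_ite, mul_zero, Finset.sum_ite_eq, Finset.mem_univ, if_true]
      rw [hSdef, Finset.sum_div]
      refine Finset.sum_congr rfl fun a _ => ?_
      simp only [hc, real_inner_comm (u (jhat k) a) (r k)]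
      rw [div_mul_cancel₀ _ (ne_of_gt hN')]
      ring
    have hmin' := hmin (k + 1) _ hwmem
    rw [hYw, norm_sub_sq_real, hrg, hgg] at hmin'
    linarith
  -- excess risk bound
  have H2 : ∀ k, ‖r k‖ ^ 2 - ‖Y - f‖ ^ 2 ≤ 2 * V * Real.sqrt (S k) := by
    intro k
    have hPmem : (Submodule.orthogonalProjection (K k) Y : EuclideanSpace ℝ (Fin N)) ∈ K k := Submodule.coe_mem _
    have hrP : (inner ℝ (r k) ((Submodule.orthogonalProjection (K k) Y : EuclideanSpace ℝ (Fin N))) : ℝ) = 0 := horth k _ hPmem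
    have hsplit : Y - f = r k + ((Submodule.orthogonalProjection (K k) Y : EuclideanSpace ℝ (Fin N)) - f) := by
      rw [hr k]; abel
    have hinner : (inner ℝ (r k) ((Submodule.orthogonalProjection (K k) Y : EuclideanSpace ℝ (Fin N)) - f) : ℝ)
        = - (inner ℝ (r k) f : ℝ) := by
      rw [inner_sub_right, hrP]; ring
    have hYf : ‖Y - f‖ ^ 2 ≥ ‖r k‖ ^ 2 - 2 * (inner ℝ (r k) f : ℝ) := by
      rw [hsplit, norm_add_sq_real, hinner]
      nlinarith [sq_nonneg ‖(Submodule.orthogonalProjection (K k) Y : EuclideanSpace ℝ (Fin N)) - f‖]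
    have hrf : (inner ℝ (r k) f : ℝ) ≤ V * Real.sqrt (S k) := by
      rw [hf, inner_sum]
      have hterm : ∀ j : Fin p, (inner ℝ (r k) (∑ a, β j a • u j a) : ℝ)
          ≤ Real.sqrt (∑ a, (β j a) ^ 2) * Real.sqrt (S k) := by
        intro j
        rw [inner_sum]
        simp only [real_inner_smul_right]
        by_cases hj : j ∈ (Finset.range k).image jhat
        · have hz : ∀ a, (inner ℝ (r k) (u j a) : ℝ) = 0 := fun a => horth k _ (hmem k j hj a)
          simp only [hz, mul_zero, Finset.sum_const_zero]
          positivity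
        · have hCS := oga_cs Finset.univ (fun a => β j a) (fun a => (inner ℝ (r k) (u j a) : ℝ))
          refine hCS.trans ?_
          apply mul_le_mul_of_nonneg_left _ (Real.sqrt_nonneg _)
          apply Real.sqrt_le_sqrt
          have := hgreedy k j hj
          rw [hSdef]
          calc ∑ a, (inner ℝ (r k) (u j a) : ℝ) ^ 2
              = ∑ a, (inner ℝ (u j a) (r k) : ℝ) ^ 2 := by
                refine Finset.sum_congr rfl fun a _ => ?_
                rw [real_inner_comm]
            _ ≤ _ := this
      calc (∑ j, (inner ℝ (r k) (∑ a, β j a • u j a) : ℝ))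
          ≤ ∑ j, Real.sqrt (∑ a, (β j a) ^ 2) * Real.sqrt (S k) :=
            Finset.sum_le_sum fun j _ => hterm j
        _ = V * Real.sqrt (S k) := by rw [hV, Finset.sum_mul]
    linarith
  -- nonnegativity of V
  have hVnn : 0 ≤ V := hV ▸ Finset.sum_nonneg fun j _ => Real.sqrt_nonneg _
  by_cases hV0 : V = 0
  · have h := H2 m
    rw [hV0] at h ⊢
    simp only [mul_zero, zero_mul] at h
    have h4 : 4 * (0:ℝ) ^ 2 / m = 0 := by ring
    rw [h4, add_zero]
    exact hdivle _ _ (by linarith)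
  -- main case: V > 0
  have hVpos : 0 < V := lt_of_le_of_ne hVnn (Ne.symm hV0)
  set C := 4 * V ^ 2 with hC
  have hCpos : 0 < C := by positivity
  set b : ℕ → ℝ := fun k => ‖r k‖ ^ 2 / N - ‖Y - f‖ ^ 2 / N with hb
  have hmono : ∀ k, b (k + 1) ≤ b k := by
    intro k
    have := H1 k
    have hS := hSnn k
    have : ‖r (k + 1)‖ ^ 2 ≤ ‖r k‖ ^ 2 := by
      have hdiv : 0 ≤ S k / N := div_nonneg hS hN'.le
      linarith
    simp only [hb]
    have := hdivle _ _ this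
    linarith
  have hstep : ∀ k, 0 ≤ b k → b (k + 1) ≤ b k - b k ^ 2 / C := by
    intro k hbk
    have h1 := H1 k
    have h2 := H2 k
    have hbkN : N * b k = ‖r k‖ ^ 2 - ‖Y - f‖ ^ 2 := by
      simp only [hb]; field_simp
    have hsq : (N * b k) ^ 2 ≤ C * S k := by
      have hl : N * b k ≤ 2 * V * Real.sqrt (S k) := by rw [hbkN]; exact h2
      have hnn : 0 ≤ N * b k := mul_nonneg hN'.le hbk
      have := mul_self_le_mul_self hnn hl
      have hsqrt : Real.sqrt (S k) * Real.sqrt (S k) = S k := Real.mul_self_sqrt (hSnn k)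
      nlinarith [Real.sqrt_nonneg (S k)]
    have hb1 : b (k + 1) ≤ b k - S k / (N : ℝ) ^ 2 := by
      have h1' : ‖r (k + 1)‖ ^ 2 / (N:ℝ) ≤ (‖r k‖ ^ 2 - S k / N) / N := hdivle _ _ h1
      rw [sub_div] at h1'
      have hdd : S k / (N:ℝ) / N = S k / (N:ℝ) ^ 2 := by rw [div_div, sq]
      simp only [hb]
      linarith [hdd ▸ h1']
    have hfrac : b k ^ 2 / C ≤ S k / (N : ℝ) ^ 2 := by
      rw [div_le_div_iff₀ hCpos (by positivity)]
      nlinarith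
    linarith
  have := oga_recursion C hCpos b hmono hstep m hm
  simp only [hb] at this
  linarith
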